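/- Let (Z, D, U) be random variables with Z binary (0-1 valued), D binary, and suppose Z is independent of U, and E[D | Z=1, U] − E[D | Z=0, U] = δ almost surely for a constant δ ≠ 0. Let f(z) = P(Z = z) with f(0), f(1) > 0. Then for any bounded measurable function H of a random variable W satisfying W ⟂ (D,Z) | U, one has E[ H(W) · D · (2Z−1) / (f(Z) δ) ] = E[ H(W) · E[D|U] ] · 0 + E[H(W) · (E[D|Z=1,U] − E[D|Z=0,U])/δ ] = E[H(W)] whenever E[D|Z=1,U]−E[D|Z=0,U] = δ; in short E[ H(W)·D·(2Z−1)/(f(Z)δ) ] = E[H(W)]. -/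

import Mathlib

open MeasureTheory ProbabilityTheory Real

section Aux

variable {Ω : Type*}

lemma wit_integrable_of_bdd {_ : MeasurableSpace Ω} {μ : Measure Ω} [IsFiniteMeasure μ] {f : Ω → ℝ}
    (hf : AEStronglyMeasurable f μ) {C : ℝ} (h : ∀ ω, |f ω| ≤ C) : Integrable f μ :=
  Integrable.mono' (integrable_const C) hf (Filter.Eventually.of_forall fun ω => by
    simpa [Real.norm_eq_abs] using h ω)

lemma wit_integral_mul_eq_zero {_ : MeasurableSpace Ω} {μ : Measure Ω} [IsProbabilityMeasure μ]
    {W : Ω → ℝ} (hW : Measurable W) {H : ℝ → ℝ} (hHmeas : Measurable H)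
    {C : ℝ} (hHbdd : ∀ x, |H x| ≤ C)
    {φ : Ω → ℝ} (hφi : Integrable φ μ)
    (hzero : ∀ B : Set ℝ, MeasurableSet B → ∫ ω in W ⁻¹' B, φ ω ∂μ = 0) :
    ∫ ω, H (W ω) * φ ω ∂μ = 0 := by
  have hmW : MeasurableSpace.comap W inferInstance ≤ _ := hW.comap_le
  have h0 : (fun _ : Ω => (0 : ℝ)) =ᵐ[μ] μ[φ|MeasurableSpace.comap W inferInstance] := by
    refine ae_eq_condExp_of_forall_setIntegral_eq hmW hφi
      (fun s _ _ => (integrable_zero _ _ _).integrableOn)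
      (fun s hs _ => ?_) ?_
    · obtain ⟨B, hB, rfl⟩ := hs
      simp [hzero B hB]
    · exact StronglyMeasurable.aestronglyMeasurable
        (@stronglyMeasurable_const _ _ (MeasurableSpace.comap W inferInstance) _ _)
  have hWm : @Measurable Ω ℝ (MeasurableSpace.comap W inferInstance) _ W := fun s hs => ⟨s, hs, rfl⟩
  have hHW : StronglyMeasurable[MeasurableSpace.comap W inferInstance] fun ω => H (W ω) :=
    (hHmeas.comp hWm).stronglyMeasurable
  have hpull : μ[(fun ω => H (W ω)) * φ|MeasurableSpace.comap W inferInstance] =ᵐ[μ]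
      (fun ω => H (W ω)) * μ[φ|MeasurableSpace.comap W inferInstance] :=
    condExp_stronglyMeasurable_mul_of_bound hmW hHW hφi C
      (Filter.Eventually.of_forall fun ω => by
        simpa [Real.norm_eq_abs] using hHbdd (W ω))
  calc ∫ ω, H (W ω) * φ ω ∂μ
      = ∫ ω, (μ[(fun ω => H (W ω)) * φ|MeasurableSpace.comap W inferInstance]) ω ∂μ :=
        (integral_condExp hmW).symm
    _ = 0 := by
        rw [integral_congr_ae (hpull.trans ?_), integral_zero]
        filter_upwards [h0] with ω hω
        simp [← hω]

lemma wit_trim_cond {m : MeasurableSpace Ω} [mΩ : MeasurableSpace Ω] (hm : m ≤ mΩ)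
    {μ : Measure Ω} [IsFiniteMeasure μ] {S : Set Ω} (hS : MeasurableSet S) (hne : μ S ≠ 0)
    (hInd : ∀ s, MeasurableSet[m] s → μ (S ∩ s) = μ S * μ s) :
    (μ[|S]).trim hm = μ.trim hm := by
  refine @Measure.ext Ω m (μ[|S].trim hm) (μ.trim hm) fun s hs => ?_
  rw [trim_measurableSet_eq hm hs, trim_measurableSet_eq hm hs, cond_apply hS, hInd s hs,
    ← mul_assoc, ENNReal.inv_mul_cancel hne (measure_ne_top μ S), one_mul]

lemma wit_condexp_cond {m : MeasurableSpace Ω} [mΩ : MeasurableSpace Ω] (hm : m ≤ mΩ)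
    (μ : Measure Ω) [IsProbabilityMeasure μ] {D : Ω → ℝ} (hD : Measurable D)
    (hD1 : ∀ ω, |D ω| ≤ 1) {S : Set Ω} (hS : MeasurableSet S) (hne : μ S ≠ 0)
    (htrim : (μ[|S]).trim hm = μ.trim hm) :
    μ[S.indicator D|m] =ᵐ[μ] fun ω => (μ S).toReal * (condExp m (μ[|S]) D) ω := by
  haveI : IsProbabilityMeasure (μ[|S]) := cond_isProbabilityMeasure hne
  have hDν : Integrable D (μ[|S]) := wit_integrable_of_bdd hD.aestronglyMeasurable hD1
  have hgm : StronglyMeasurable[m] (condExp m (μ[|S]) D) := stronglyMeasurable_condExp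
  have hg_int : Integrable (condExp m (μ[|S]) D) μ :=
    integrable_of_integrable_trim hm (htrim ▸ integrable_condExp.trim hm hgm)
  have hSD : Integrable (S.indicator D) μ :=
    wit_integrable_of_bdd (hD.indicator hS).aestronglyMeasurable (C := 1)
      (fun ω => by by_cases h : ω ∈ S <;> simp [Set.indicator_apply, h, hD1 ω])
  have hptoR : (μ S).toReal ≠ 0 := ENNReal.toReal_ne_zero.mpr ⟨hne, measure_ne_top μ S⟩
  refine (ae_eq_condExp_of_forall_setIntegral_eq hm hSD
    (fun s _ _ => (hg_int.const_mul _).integrableOn)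
    (fun s hs _ => ?_)
    ((stronglyMeasurable_const.mul hgm).aestronglyMeasurable)).symm
  have hsm : MeasurableSet s := hm s hs
  have hrestrict : (μ[|S]).restrict s = (μ S)⁻¹ • μ.restrict (s ∩ S) := by
    rw [ProbabilityTheory.cond, Measure.restrict_smul, Measure.restrict_restrict hsm]
  have h2 : ∫ ω in s, D ω ∂(μ[|S]) = ((μ S)⁻¹).toReal * ∫ ω in s ∩ S, D ω ∂μ := by
    rw [hrestrict, integral_smul_measure, smul_eq_mul]
  have h3 : ∫ ω in s, D ω ∂(μ[|S]) = ∫ ω in s, condExp m (μ[|S]) D ω ∂(μ[|S]) :=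
    (setIntegral_condExp hm hDν hs).symm
  have h4 : ∫ ω in s, condExp m (μ[|S]) D ω ∂(μ[|S]) = ∫ ω in s, condExp m (μ[|S]) D ω ∂μ := by
    rw [← integral_indicator hsm, ← integral_indicator hsm,
      integral_trim hm (hgm.indicator hs) (μ := μ[|S]),
      integral_trim hm (hgm.indicator hs) (μ := μ), htrim]
  calc ∫ ω in s, (μ S).toReal * condExp m (μ[|S]) D ω ∂μ
      = (μ S).toReal * ∫ ω in s, condExp m (μ[|S]) D ω ∂μ := by
        rw [MeasureTheory.integral_const_mul]
    _ = (μ S).toReal * ∫ ω in s, D ω ∂(μ[|S]) := by rw [← h4, ← h3]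
    _ = ∫ ω in s ∩ S, D ω ∂μ := by
        rw [h2, ← mul_assoc, ENNReal.toReal_inv, mul_inv_cancel₀ hptoR, one_mul]
    _ = ∫ ω in s, S.indicator D ω ∂μ := (setIntegral_indicator hS).symm

lemma wit_condexp_ind_bound {m : MeasurableSpace Ω} [mΩ : MeasurableSpace Ω] (hm : m ≤ mΩ)
    {μ : Measure Ω} [IsProbabilityMeasure μ] {t : Set Ω} (ht : MeasurableSet t) :
    ∀ᵐ ω ∂μ, ‖(μ[t.indicator (fun _ => (1:ℝ))|m]) ω‖ ≤ 1 := by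
  have hint : Integrable (t.indicator fun _ => (1:ℝ)) μ := (integrable_const 1).indicator ht
  have h1 : μ[t.indicator (fun _ => (1:ℝ))|m] ≤ᵐ[μ] μ[fun _ => (1:ℝ)|m] :=
    condExp_mono hint (integrable_const 1)
      (Filter.Eventually.of_forall fun ω => by
        by_cases h : ω ∈ t <;> simp [Set.indicator_apply, h])
  have h2 : 0 ≤ᵐ[μ] μ[t.indicator (fun _ => (1:ℝ))|m] :=
    condExp_nonneg (Filter.Eventually.of_forall fun ω => by
      by_cases h : ω ∈ t <;> simp [Set.indicator_apply, h])
  have h3 : μ[fun _ : Ω => (1:ℝ)|m] = fun _ => (1:ℝ) := condExp_const (μ := μ) hm (1:ℝ)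
  filter_upwards [h1, h2] with ω ha hb
  rw [h3] at ha
  simp only [Pi.zero_apply] at hb
  rw [Real.norm_eq_abs, abs_le]
  exact ⟨by linarith, ha⟩

lemma wit_setIntegral_eq {m : MeasurableSpace Ω} [mΩ : MeasurableSpace Ω] (hm : m ≤ mΩ) {μ : Measure Ω} [IsProbabilityMeasure μ] {S B : Set Ω}
    (hS : MeasurableSet S) (hB : MeasurableSet B)
    (hfac : (μ[(S ∩ B).indicator (fun _ => (1:ℝ))|m]) =ᵐ[μ]
      fun ω => (μ[S.indicator (fun _ => (1:ℝ))|m]) ω * (μ[B.indicator (fun _ => (1:ℝ))|m]) ω) :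
    ∫ ω in S, B.indicator (fun _ => (1:ℝ)) ω ∂μ
      = ∫ ω in S, (μ[B.indicator (fun _ => (1:ℝ))|m]) ω ∂μ := by
  have hSB : MeasurableSet (S ∩ B) := hS.inter hB
  have hb := wit_condexp_ind_bound hm (μ := μ) hB
  have hSind : Integrable (S.indicator fun _ => (1:ℝ)) μ := (integrable_const 1).indicator hS
  have hpull := condExp_stronglyMeasurable_mul_of_bound hm
    (stronglyMeasurable_condExp (f := B.indicator fun _ => (1:ℝ))) hSind 1 hb
  calc ∫ ω in S, B.indicator (fun _ => (1:ℝ)) ω ∂μ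
      = ∫ ω in S ∩ B, (1:ℝ) ∂μ := setIntegral_indicator hB
    _ = ∫ ω, (S ∩ B).indicator (fun _ => (1:ℝ)) ω ∂μ := (integral_indicator hSB).symm
    _ = ∫ ω, (μ[(S ∩ B).indicator (fun _ => (1:ℝ))|m]) ω ∂μ := (integral_condExp hm).symm
    _ = ∫ ω, (μ[(μ[B.indicator (fun _ => (1:ℝ))|m]) * S.indicator (fun _ => (1:ℝ))|m]) ω ∂μ := by
        refine integral_congr_ae (hfac.trans ?_)
        refine (Filter.EventuallyEq.trans ?_ hpull.symm)
        exact Filter.Eventually.of_forall fun ω => mul_comm _ _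
    _ = ∫ ω, (μ[B.indicator (fun _ => (1:ℝ))|m]) ω * S.indicator (fun _ => (1:ℝ)) ω ∂μ :=
        integral_condExp hm
    _ = ∫ ω, S.indicator (fun ω' => (μ[B.indicator (fun _ => (1:ℝ))|m]) ω') ω ∂μ := by
        refine integral_congr_ae (Filter.Eventually.of_forall fun ω => ?_)
        by_cases h : ω ∈ S <;> simp [Set.indicator_apply, h]
    _ = ∫ ω in S, (μ[B.indicator (fun _ => (1:ℝ))|m]) ω ∂μ := integral_indicator hS

end Aux

/-- Core weighting identity (S1): under Z ⟂ U, W ⟂ (D,Z) | U and the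
no-interaction condition E[D|Z=1,U] − E[D|Z=0,U] = δ ≠ 0 a.s., for any bounded
measurable H one has E[H(W)·D·(2Z−1)/(f(Z)δ)] = E[H(W)]. -/
theorem weighting_identity_treated
    {Ω : Type*} [MeasurableSpace Ω] [StandardBorelSpace Ω]
    (μ : Measure Ω) [IsProbabilityMeasure μ]
    (Z D U W : Ω → ℝ) (H : ℝ → ℝ) (δ : ℝ)
    (hZ : Measurable Z) (hD : Measurable D) (hU : Measurable U) (hW : Measurable W)
    (hHmeas : Measurable H) (hHbdd : ∃ C, ∀ x, |H x| ≤ C)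
    (hZ01 : ∀ ω, Z ω = 0 ∨ Z ω = 1)
    (hD01 : ∀ ω, D ω = 0 ∨ D ω = 1)
    (hZpos : 0 < μ {ω | Z ω = 1}) (hZlt : μ {ω | Z ω = 1} < 1)
    (hindep : IndepFun Z U μ)
    (hci : CondIndepFun (MeasurableSpace.comap U inferInstance) hU.comap_le
      W (fun ω => (D ω, Z ω)) μ)
    (hδ : δ ≠ 0)
    (hdiff : ∀ᵐ ω ∂μ,
      MeasureTheory.condExp (MeasurableSpace.comap U inferInstance)
        (ProbabilityTheory.cond μ {ω' | Z ω' = 1}) D ω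
      - MeasureTheory.condExp (MeasurableSpace.comap U inferInstance)
        (ProbabilityTheory.cond μ {ω' | Z ω' = 0}) D ω = δ) :
    ∫ ω, H (W ω) * D ω * (2 * Z ω - 1) /
        ((μ {ω' | Z ω' = Z ω}).toReal * δ) ∂μ
      = ∫ ω, H (W ω) ∂μ := by
  obtain ⟨C, hC⟩ := hHbdd
  have hm : MeasurableSpace.comap U inferInstance ≤ _ := hU.comap_le
  -- basic sets and measures
  have hA : MeasurableSet {ω' | Z ω' = (1:ℝ)} := hZ (measurableSet_singleton 1)
  have hA0 : MeasurableSet {ω' | Z ω' = (0:ℝ)} := hZ (measurableSet_singleton 0)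
  have hμA_ne : μ {ω' | Z ω' = (1:ℝ)} ≠ 0 := hZpos.ne'
  have hcompl : {ω' | Z ω' = (0:ℝ)} = {ω' | Z ω' = (1:ℝ)}ᶜ := by
    ext ω; rcases hZ01 ω with h | h <;> simp [h]
  have hμA0_ne : μ {ω' | Z ω' = (0:ℝ)} ≠ 0 := by
    rw [hcompl, measure_compl hA (measure_ne_top μ _), measure_univ]
    intro h
    exact absurd (tsub_eq_zero_iff_le.mp h) (not_le.mpr hZlt)
  have hpne : (μ {ω' | Z ω' = (1:ℝ)}).toReal ≠ 0 :=
    ENNReal.toReal_ne_zero.mpr ⟨hμA_ne, measure_ne_top μ _⟩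
  have hqne : (μ {ω' | Z ω' = (0:ℝ)}).toReal ≠ 0 :=
    ENNReal.toReal_ne_zero.mpr ⟨hμA0_ne, measure_ne_top μ _⟩
  -- independence on the comap σ-algebra
  have hind1 : ∀ s, MeasurableSet[MeasurableSpace.comap U inferInstance] s →
      μ ({ω' | Z ω' = (1:ℝ)} ∩ s) = μ {ω' | Z ω' = (1:ℝ)} * μ s := by
    rintro s ⟨B, hB, rfl⟩
    exact hindep.measure_inter_preimage_eq_mul {1} B (measurableSet_singleton 1) hB
  have hind0 : ∀ s, MeasurableSet[MeasurableSpace.comap U inferInstance] s →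
      μ ({ω' | Z ω' = (0:ℝ)} ∩ s) = μ {ω' | Z ω' = (0:ℝ)} * μ s := by
    rintro s ⟨B, hB, rfl⟩
    exact hindep.measure_inter_preimage_eq_mul {0} B (measurableSet_singleton 0) hB
  have htrim1 := wit_trim_cond hm hA hμA_ne hind1
  have htrim0 := wit_trim_cond hm hA0 hμA0_ne hind0
  have hD1 : ∀ ω, |D ω| ≤ 1 := fun ω => by rcases hD01 ω with h | h <;> simp [h]
  have hL1 := wit_condexp_cond hm μ hD hD1 hA hμA_ne htrim1
  have hL0 := wit_condexp_cond hm μ hD hD1 hA0 hμA0_ne htrim0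
  -- the weight function is a.e. δ
  have hψ : (fun ω =>
      ((μ {ω' | Z ω' = (1:ℝ)}).toReal)⁻¹ *
        (μ[Set.indicator {ω' | Z ω' = (1:ℝ)} D|MeasurableSpace.comap U inferInstance]) ω
      - ((μ {ω' | Z ω' = (0:ℝ)}).toReal)⁻¹ *
        (μ[Set.indicator {ω' | Z ω' = (0:ℝ)} D|MeasurableSpace.comap U inferInstance]) ω)
      =ᵐ[μ] fun _ => δ := by
    filter_upwards [hL1, hL0, hdiff] with ω h1 h0 hd
    rw [h1, h0, ← mul_assoc, ← mul_assoc, inv_mul_cancel₀ hpne, inv_mul_cancel₀ hqne,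
      one_mul, one_mul]
    exact hd
  -- conditional independence: factorization of set integrals
  have hfac := (condIndepFun_iff_condExp_inter_preimage_eq_mul
    (hm' := hU.comap_le) hW (hD.prodMk hZ)).mp hci
  have hB₁ : MeasurableSet ((fun ω => (D ω, Z ω)) ⁻¹' {((1:ℝ), (1:ℝ))}) :=
    (hD.prodMk hZ) (measurableSet_singleton _)
  have hB₀ : MeasurableSet ((fun ω => (D ω, Z ω)) ⁻¹' {((1:ℝ), (0:ℝ))}) :=
    (hD.prodMk hZ) (measurableSet_singleton _)
  have heq1 : Set.indicator {ω' | Z ω' = (1:ℝ)} D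
      = Set.indicator ((fun ω => (D ω, Z ω)) ⁻¹' {((1:ℝ), (1:ℝ))}) (fun _ => (1:ℝ)) := by
    funext ω
    rcases hD01 ω with hd | hd <;> rcases hZ01 ω with hz | hz <;>
      simp [Set.indicator_apply, Set.mem_setOf_eq, Set.mem_preimage, hd, hz, Prod.ext_iff]
  have heq0 : Set.indicator {ω' | Z ω' = (0:ℝ)} D
      = Set.indicator ((fun ω => (D ω, Z ω)) ⁻¹' {((1:ℝ), (0:ℝ))}) (fun _ => (1:ℝ)) := by
    funext ω
    rcases hD01 ω with hd | hd <;> rcases hZ01 ω with hz | hz <;>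
      simp [Set.indicator_apply, Set.mem_setOf_eq, Set.mem_preimage, hd, hz, Prod.ext_iff]
  -- integrable indicator functions
  have hint1 : Integrable (Set.indicator {ω' | Z ω' = (1:ℝ)} D) μ :=
    wit_integrable_of_bdd (hD.indicator hA).aestronglyMeasurable (C := 1)
      (fun ω => by by_cases h : ω ∈ {ω' | Z ω' = (1:ℝ)} <;> simp [Set.indicator_apply, h, hD1 ω])
  have hint0 : Integrable (Set.indicator {ω' | Z ω' = (0:ℝ)} D) μ :=
    wit_integrable_of_bdd (hD.indicator hA0).aestronglyMeasurable (C := 1)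
      (fun ω => by by_cases h : ω ∈ {ω' | Z ω' = (0:ℝ)} <;> simp [Set.indicator_apply, h, hD1 ω])
  have hwbd : ∀ᵐ x ∂μ, ‖H (W x)‖ ≤ C := Filter.Eventually.of_forall fun ω => by simpa using hC (W ω)
  have hw_asm : AEStronglyMeasurable (fun ω => H (W ω)) μ :=
    (hHmeas.comp hW).aestronglyMeasurable
  -- key identity via conditional independence
  have hKey : ∀ (f : Ω → ℝ), Integrable f μ →
      (∀ B : Set ℝ, MeasurableSet B →
        ∫ ω in W ⁻¹' B, f ω ∂μ
          = ∫ ω in W ⁻¹' B, (μ[f|MeasurableSpace.comap U inferInstance]) ω ∂μ) →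
      ∫ ω, H (W ω) * f ω ∂μ
        = ∫ ω, H (W ω) * (μ[f|MeasurableSpace.comap U inferInstance]) ω ∂μ := by
    intro f hfi hset
    have hφi : Integrable
        (fun ω => f ω - (μ[f|MeasurableSpace.comap U inferInstance]) ω) μ :=
      hfi.sub integrable_condExp
    have h0 := wit_integral_mul_eq_zero hW hHmeas hC hφi (fun B hB => by
      rw [integral_sub hfi.integrableOn integrable_condExp.integrableOn, hset B hB, sub_self])
    have hexp : ∫ ω, (H (W ω) * f ω
        - H (W ω) * (μ[f|MeasurableSpace.comap U inferInstance]) ω) ∂μ = 0 := by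
      simpa [mul_sub] using h0
    rw [integral_sub (hfi.bdd_mul hw_asm hwbd) (integrable_condExp.bdd_mul hw_asm hwbd)] at hexp
    linarith
  -- set-integral identities from conditional independence
  have hset1 : ∀ B : Set ℝ, MeasurableSet B →
      ∫ ω in W ⁻¹' B, Set.indicator {ω' | Z ω' = (1:ℝ)} D ω ∂μ
        = ∫ ω in W ⁻¹' B, (μ[Set.indicator {ω' | Z ω' = (1:ℝ)} D|
            MeasurableSpace.comap U inferInstance]) ω ∂μ := by
    intro B hB
    rw [heq1]
    exact wit_setIntegral_eq hm (hW hB) hB₁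
      (hfac B {((1:ℝ), (1:ℝ))} hB (measurableSet_singleton _))
  have hset0 : ∀ B : Set ℝ, MeasurableSet B →
      ∫ ω in W ⁻¹' B, Set.indicator {ω' | Z ω' = (0:ℝ)} D ω ∂μ
        = ∫ ω in W ⁻¹' B, (μ[Set.indicator {ω' | Z ω' = (0:ℝ)} D|
            MeasurableSpace.comap U inferInstance]) ω ∂μ := by
    intro B hB
    rw [heq0]
    exact wit_setIntegral_eq hm (hW hB) hB₀
      (hfac B {((1:ℝ), (0:ℝ))} hB (measurableSet_singleton _))
  have hI1 := hKey _ hint1 hset1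
  have hI0 := hKey _ hint0 hset0
  -- pointwise rewriting of the integrand
  have hpt : ∀ ω, H (W ω) * D ω * (2 * Z ω - 1) / ((μ {ω' | Z ω' = Z ω}).toReal * δ)
      = δ⁻¹ * (((μ {ω' | Z ω' = (1:ℝ)}).toReal)⁻¹ *
            (H (W ω) * Set.indicator {ω' | Z ω' = (1:ℝ)} D ω)
          - ((μ {ω' | Z ω' = (0:ℝ)}).toReal)⁻¹ *
            (H (W ω) * Set.indicator {ω' | Z ω' = (0:ℝ)} D ω)) := by
    intro ω
    rcases hZ01 ω with hz | hz
    · have h1 : Set.indicator {ω' | Z ω' = (1:ℝ)} D ω = 0 :=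
        Set.indicator_of_notMem (by simp [Set.mem_setOf_eq, hz]) _
      have h0 : Set.indicator {ω' | Z ω' = (0:ℝ)} D ω = D ω :=
        Set.indicator_of_mem (show ω ∈ {ω' | Z ω' = (0:ℝ)} from hz) D
      simp only [hz, h1, h0]
      field_simp
      first
        | ring1
        | exact Or.inl trivial
        | exact Or.inl (mul_comm _ _)
    · have h1 : Set.indicator {ω' | Z ω' = (1:ℝ)} D ω = D ω :=
        Set.indicator_of_mem (show ω ∈ {ω' | Z ω' = (1:ℝ)} from hz) D
      have h0 : Set.indicator {ω' | Z ω' = (0:ℝ)} D ω = 0 :=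
        Set.indicator_of_notMem (by simp [Set.mem_setOf_eq, hz]) _
      simp only [hz, h1, h0]
      field_simp
      ring
  -- final computation
  calc ∫ ω, H (W ω) * D ω * (2 * Z ω - 1) / ((μ {ω' | Z ω' = Z ω}).toReal * δ) ∂μ
      = ∫ ω, δ⁻¹ * (((μ {ω' | Z ω' = (1:ℝ)}).toReal)⁻¹ *
            (H (W ω) * Set.indicator {ω' | Z ω' = (1:ℝ)} D ω)
          - ((μ {ω' | Z ω' = (0:ℝ)}).toReal)⁻¹ *
            (H (W ω) * Set.indicator {ω' | Z ω' = (0:ℝ)} D ω)) ∂μ :=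
        integral_congr_ae (Filter.Eventually.of_forall hpt)
    _ = δ⁻¹ * (((μ {ω' | Z ω' = (1:ℝ)}).toReal)⁻¹ *
            ∫ ω, H (W ω) * Set.indicator {ω' | Z ω' = (1:ℝ)} D ω ∂μ
          - ((μ {ω' | Z ω' = (0:ℝ)}).toReal)⁻¹ *
            ∫ ω, H (W ω) * Set.indicator {ω' | Z ω' = (0:ℝ)} D ω ∂μ) := by
        rw [MeasureTheory.integral_const_mul, integral_sub
          ((hint1.bdd_mul hw_asm hwbd).const_mul _) ((hint0.bdd_mul hw_asm hwbd).const_mul _),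
          MeasureTheory.integral_const_mul, MeasureTheory.integral_const_mul]
    _ = δ⁻¹ * (((μ {ω' | Z ω' = (1:ℝ)}).toReal)⁻¹ *
            ∫ ω, H (W ω) * (μ[Set.indicator {ω' | Z ω' = (1:ℝ)} D|
              MeasurableSpace.comap U inferInstance]) ω ∂μ
          - ((μ {ω' | Z ω' = (0:ℝ)}).toReal)⁻¹ *
            ∫ ω, H (W ω) * (μ[Set.indicator {ω' | Z ω' = (0:ℝ)} D|
              MeasurableSpace.comap U inferInstance]) ω ∂μ) := by
        rw [hI1, hI0]
    _ = δ⁻¹ * ∫ ω, H (W ω) *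
          (((μ {ω' | Z ω' = (1:ℝ)}).toReal)⁻¹ *
            (μ[Set.indicator {ω' | Z ω' = (1:ℝ)} D|MeasurableSpace.comap U inferInstance]) ω
          - ((μ {ω' | Z ω' = (0:ℝ)}).toReal)⁻¹ *
            (μ[Set.indicator {ω' | Z ω' = (0:ℝ)} D|MeasurableSpace.comap U inferInstance]) ω) ∂μ
        := by
        congr 1
        rw [integral_congr_ae (Filter.Eventually.of_forall (fun ω => by ring :
          ∀ ω, H (W ω) *
            (((μ {ω' | Z ω' = (1:ℝ)}).toReal)⁻¹ *
              (μ[Set.indicator {ω' | Z ω' = (1:ℝ)} D|MeasurableSpace.comap U inferInstance]) ω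
            - ((μ {ω' | Z ω' = (0:ℝ)}).toReal)⁻¹ *
              (μ[Set.indicator {ω' | Z ω' = (0:ℝ)} D|MeasurableSpace.comap U inferInstance]) ω)
          = ((μ {ω' | Z ω' = (1:ℝ)}).toReal)⁻¹ *
              (H (W ω) * (μ[Set.indicator {ω' | Z ω' = (1:ℝ)} D|
                MeasurableSpace.comap U inferInstance]) ω)
            - ((μ {ω' | Z ω' = (0:ℝ)}).toReal)⁻¹ *
              (H (W ω) * (μ[Set.indicator {ω' | Z ω' = (0:ℝ)} D|
                MeasurableSpace.comap U inferInstance]) ω))),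
          integral_sub ((integrable_condExp.bdd_mul hw_asm hwbd).const_mul _)
            ((integrable_condExp.bdd_mul hw_asm hwbd).const_mul _),
          MeasureTheory.integral_const_mul, MeasureTheory.integral_const_mul]
    _ = δ⁻¹ * ∫ ω, H (W ω) * δ ∂μ := by
        congr 1
        refine integral_congr_ae ?_
        filter_upwards [hψ] with ω h
        rw [h]
    _ = ∫ ω, H (W ω) ∂μ := by
        rw [MeasureTheory.integral_mul_const]
        field_simp
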